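/- arXiv:2510.06533 — 9 statements merged into one kernel-verified Lean document; each statement's English description precedes it below -/
import Mathlib

section
/- The instance (2, 3, 5) is not covering-schedulable: there is no function S : ℤ → Fin 3 such that for each i, agent i is assigned at most once in any interval of a_i consecutive days (where a = (2,3,5)) and every day some agent is assigned. -/
/-- Covering-schedulability of an instance of periods `a`. -/
def Schedulable {k : ℕ} (a : Fin k → ℤ) : Prop :=
  ∃ S : ℤ → Fin k, ∀ (i : Fin k) (m : ℤ),
    Set.Subsingleton {t : ℤ | m ≤ t ∧ t < m + a i ∧ S t = i}

def per : Fin 3 → ℕ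
  | 0 => 2
  | 1 => 3
  | 2 => 5

def ok (f : Fin 8 → Fin 3) : Prop :=
  ∀ t u : Fin 8, t < u → f t = f u → per (f t) ≤ (u : ℕ) - (t : ℕ)

instance : DecidablePred ok := fun f => by unfold ok; infer_instance

set_option maxRecDepth 100000 in
set_option maxHeartbeats 2000000 in
lemma no_ok' : ∀ a b c d e f g h : Fin 3, ¬ ok ![a,b,c,d,e,f,g,h] := by decide

lemma no_ok : ∀ f : Fin 8 → Fin 3, ¬ ok f := by
  intro f hf
  have := no_ok' (f 0) (f 1) (f 2) (f 3) (f 4) (f 5) (f 6) (f 7)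
  apply this
  intro t u htu heq
  have e : ![f 0, f 1, f 2, f 3, f 4, f 5, f 6, f 7] = f := by
    funext x; fin_cases x <;> rfl
  rw [e] at heq ⊢
  exact hf t u htu heq

lemma per_eq (i : Fin 3) : (![2, 3, 5] i : ℤ) = (per i : ℕ) := by
  fin_cases i <;> rfl

/-- The instance (2, 3, 5) is not covering-schedulable. -/
theorem not_schedulable_two_three_five : ¬ Schedulable ![2, 3, 5] := by
  rintro ⟨S, h⟩
  apply no_ok (fun n : Fin 8 => S n)
  intro t u htu hst
  by_contra hlt
  push_neg at hlt
  simp only at hst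
  have htu' : (t : ℕ) < (u : ℕ) := htu
  have hdist : ((u : ℕ) : ℤ) - ((t : ℕ) : ℤ) < (per (S t) : ℤ) := by omega
  have key := h (S (t : ℕ)) (t : ℕ)
  have h1 : ((t : ℕ) : ℤ) ∈ {x : ℤ | ((t : ℕ) : ℤ) ≤ x ∧ x < (t : ℕ) + ![2,3,5] (S (t : ℕ)) ∧ S x = S (t : ℕ)} := by
    refine ⟨le_refl _, ?_, rfl⟩
    rw [per_eq]
    have : 0 < (per (S (t:ℕ)) : ℤ) := by
      cases' (S (t:ℕ)) with v hv
      interval_cases v <;> simp [per]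
    omega
  have h2 : ((u : ℕ) : ℤ) ∈ {x : ℤ | ((t : ℕ) : ℤ) ≤ x ∧ x < (t : ℕ) + ![2,3,5] (S (t : ℕ)) ∧ S x = S (t : ℕ)} := by
    refine ⟨by omega, ?_, hst.symm⟩
    rw [per_eq]
    omega
  have := key h1 h2
  omega
end

section
/- The instance (3, 5, 5, 5, 7) is covering-schedulable, witnessed by the 21-periodic schedule assigning agent 1 on days ≡ 0,3,7,10,14,17, agent 2 on days ≡ 1,6,11,16, agent 3 on days ≡ 2,8,13,18, agent 4 on days ≡ 4,9,15,20, and agent 5 on days ≡ 5,12,19 (mod 21). -/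
private def vSched : Fin 21 → Fin 5 :=
  ![0, 1, 2, 0, 3, 4, 1, 0, 2, 3, 0, 1, 4, 2, 0, 3, 1, 0, 2, 4, 3]

private def aLen : Fin 5 → ℤ := ![3, 5, 5, 5, 7]

private lemma key : ∀ r s : Fin 21, vSched r = vSched s →
    r = s ∨ (aLen (vSched r) ≤ ((r : ℤ) - s) % 21 ∧
      ((r : ℤ) - s) % 21 + aLen (vSched r) ≤ 21) := by decide

/-- The instance (3, 5, 5, 5, 7) is covering-schedulable, witnessed by the 21-periodic
schedule from the paper (agents are 0-indexed here). -/
theorem schedulable_three_five_five_five_seven :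
    ∃ S : ℤ → Fin 5,
      (∀ t : ℤ, S t =
        ![0, 1, 2, 0, 3, 4, 1, 0, 2, 3, 0, 1, 4, 2, 0, 3, 1, 0, 2, 4, 3]
          (Fin.ofNat 21 (t % 21).toNat)) ∧
      ∀ (i : Fin 5) (m : ℤ),
        Set.Subsingleton {t : ℤ | m ≤ t ∧ t < m + (![3, 5, 5, 5, 7] : Fin 5 → ℤ) i ∧ S t = i} := by
  refine ⟨fun t => vSched (Fin.ofNat 21 (t % 21).toNat), fun t => rfl, ?_⟩
  intro i m t ht t' ht'
  obtain ⟨hm, hlt, hS⟩ := ht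
  obtain ⟨hm', hlt', hS'⟩ := ht'
  set r : Fin 21 := Fin.ofNat 21 (t % 21).toNat with hr
  set s : Fin 21 := Fin.ofNat 21 (t' % 21).toNat with hs
  have hrv : ((r : ℕ) : ℤ) = t % 21 := by
    have h0 : (r : ℕ) = (t % 21).toNat % 21 := rfl
    omega
  have hsv : ((s : ℕ) : ℤ) = t' % 21 := by
    have h0 : (s : ℕ) = (t' % 21).toNat % 21 := rfl
    omega
  have ha : 3 ≤ (![3, 5, 5, 5, 7] : Fin 5 → ℤ) i ∧ (![3, 5, 5, 5, 7] : Fin 5 → ℤ) i ≤ 7 := by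
    fin_cases i <;> simp
  have hS2 : vSched r = i := hS
  have hS2' : vSched s = i := hS'
  have := key r s (hS2.trans hS2'.symm)
  rcases this with h | ⟨h1, h2⟩
  · have : (r : ℕ) = (s : ℕ) := by rw [h]
    omega
  · rw [hS2] at h1 h2
    simp only [aLen] at h1 h2
    omega
end

section
/- For every k ≥ 1, the instance B_k = (2, 3, 5, 9, …, 2^{k-1}+1) (i.e., a_i = 2^{i-1}+1 for i = 1,…,k) cannot cover 2^k consecutive days: there is no function S : [0, 2^k) ∩ ℤ → Fin k such that for each i, S assigns i at most once in any interval of a_i consecutive days within [0, 2^k). -/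
/-- Key lemma: if every day of `[A, B)` is assigned an agent `< N`, and any two
days with the same agent `i` are at distance at least `2^i + 1`, then the
interval has length at most `2^N - 1`. -/
lemma Bk_key (N : ℕ) : ∀ (A B : ℤ) (f : ℤ → ℕ),
    (∀ t, A ≤ t → t < B → f t < N) →
    (∀ t1 t2, A ≤ t1 → t1 < t2 → t2 < B → f t1 = f t2 →
      t1 + 2 ^ (f t1) + 1 ≤ t2) →
    B ≤ A + 2 ^ N - 1 := by
  induction N with
  | zero =>
    intro A B f hf _
    by_contra h
    push_neg at h
    exact Nat.not_lt_zero _ (hf A le_rfl (by simpa using h))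
  | succ N ih =>
    intro A B f hf hcon
    by_contra h
    push_neg at h
    have hB : A + 2 ^ (N + 1) ≤ B := by linarith
    have hpow : (2 : ℤ) ^ (N + 1) = 2 ^ N + 2 ^ N := by ring
    have hpos : (1 : ℤ) ≤ 2 ^ N := by exact_mod_cast Nat.one_le_two_pow
    -- there is an occurrence of agent N in [A, A + 2^N)
    have h1 : ∃ t, A ≤ t ∧ t < A + 2 ^ N ∧ f t = N := by
      by_contra hno
      push_neg at hno
      have := ih A (A + 2 ^ N) f
        (fun t ht ht' => lt_of_le_of_ne
          (Nat.lt_succ_iff.mp (hf t ht (by linarith))) (hno t ht ht'))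
        (fun t1 t2 ha hb hc hd => hcon t1 t2 ha hb (by linarith) hd)
      linarith
    -- there is an occurrence of agent N in [A + 2^N, A + 2^(N+1))
    have h2 : ∃ t, A + 2 ^ N ≤ t ∧ t < A + 2 ^ (N + 1) ∧ f t = N := by
      by_contra hno
      push_neg at hno
      have := ih (A + 2 ^ N) (A + 2 ^ (N + 1)) f
        (fun t ht ht' => lt_of_le_of_ne
          (Nat.lt_succ_iff.mp (hf t (by linarith) (by linarith))) (hno t ht ht'))
        (fun t1 t2 ha hb hc hd => hcon t1 t2 (by linarith) hb (by linarith) hd)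
      linarith
    obtain ⟨t1, ht1A, ht1B, ht1f⟩ := h1
    obtain ⟨t2, ht2A, ht2B, ht2f⟩ := h2
    have hlt : t1 < t2 := by linarith
    have hgap : t1 + 2 ^ N + 1 ≤ t2 := by
      have := hcon t1 t2 ht1A hlt (by linarith) (ht1f.trans ht2f.symm)
      rwa [ht1f] at this
    -- no occurrence of agent N strictly between t1 and t2
    have hmid : ∀ t, t1 + 1 ≤ t → t < t2 → f t ≠ N := by
      intro t ht ht' hN
      have g1 : t1 + 2 ^ N + 1 ≤ t := by
        have := hcon t1 t ht1A (by linarith) (by linarith) (ht1f.trans hN.symm)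
        rwa [ht1f] at this
      have g2 : t + 2 ^ N + 1 ≤ t2 := by
        have := hcon t t2 (by linarith) ht' (by linarith) (hN.trans ht2f.symm)
        rwa [hN] at this
      linarith
    have := ih (t1 + 1) t2 f
      (fun t ht ht' => lt_of_le_of_ne
        (Nat.lt_succ_iff.mp (hf t (by linarith) (by linarith))) (hmid t ht ht'))
      (fun s1 s2 ha hb hc hd => hcon s1 s2 (by linarith) hb (by linarith) hd)
    linarith

/-- For every k ≥ 1, the instance B_k with periods 2^{i-1}+1 cannot cover the
2^k consecutive days [0, 2^k). -/
theorem Bk_cannot_cover_interval (k : ℕ) (hk : 1 ≤ k) :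
    ¬ ∃ S : ℤ → Fin k, ∀ (i : Fin k) (m : ℤ),
      Set.Subsingleton
        {t : ℤ | 0 ≤ t ∧ t < 2 ^ k ∧ m ≤ t ∧ t < m + ((2 : ℤ) ^ (i : ℕ) + 1) ∧ S t = i} := by
  rintro ⟨S, hS⟩
  have hpos : (1 : ℤ) ≤ 2 ^ k := by exact_mod_cast Nat.one_le_two_pow
  have key := Bk_key k 0 (2 ^ k) (fun t => (S t : ℕ))
    (fun t _ _ => (S t).isLt)
    (by
      intro t1 t2 h1 h2 h3 heq
      by_contra hcon
      push_neg at hcon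
      have hSeq : S t1 = S t2 := Fin.ext heq
      have hmem1 : t1 ∈ {t : ℤ | 0 ≤ t ∧ t < 2 ^ k ∧ t1 ≤ t ∧
          t < t1 + ((2 : ℤ) ^ ((S t1 : ℕ)) + 1) ∧ S t = S t1} := by
        refine ⟨h1, by linarith, le_rfl, by nlinarith [pow_pos (by norm_num : (0:ℤ) < 2) ((S t1 : ℕ))], rfl⟩
      have hmem2 : t2 ∈ {t : ℤ | 0 ≤ t ∧ t < 2 ^ k ∧ t1 ≤ t ∧
          t < t1 + ((2 : ℤ) ^ ((S t1 : ℕ)) + 1) ∧ S t = S t1} := by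
        refine ⟨by linarith, h3, le_of_lt h2, by linarith, hSeq.symm⟩
      have := hS (S t1) t1 hmem1 hmem2
      omega)
  linarith
end

section
/- For every k ≥ 1, the instance B_k with periods a_i = 2^{i-1}+1 for i ∈ [k] is not covering-schedulable. -/
section Aux

variable {k : ℕ} (S : ℤ → Fin (k+1))

/-- Next position with nonzero color, within distance 2. -/
def nextP (x : ℤ) : ℤ := if S (x+1) ≠ 0 then x+1 else x+2

/-- Previous position with nonzero color, within distance 2. -/
def prevP (x : ℤ) : ℤ := if S (x-1) ≠ 0 then x-1 else x-2

/-- Forward selection of nonzero-colored positions. -/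
def fP : ℕ → ℤ
  | 0 => if S 0 ≠ 0 then 0 else 1
  | n+1 => nextP S (fP n)

/-- Backward selection of nonzero-colored positions. -/
def gP : ℕ → ℤ
  | 0 => if S 0 ≠ 0 then 0 else 1
  | n+1 => prevP S (gP n)

/-- Two-sided selection of nonzero-colored positions, indexed by ℤ. -/
def uP (n : ℤ) : ℤ := if 0 ≤ n then fP S n.toNat else gP S (-n).toNat

lemma nextP_ne (hP : ∀ t : ℤ, S t ≠ 0 ∨ S (t+1) ≠ 0) (x : ℤ) : S (nextP S x) ≠ 0 := by
  unfold nextP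
  split_ifs with h
  · exact h
  · rcases hP (x+1) with h' | h'
    · exact absurd h' h
    · have e : x + 1 + 1 = x + 2 := by ring
      rw [e] at h'
      exact h'

lemma prevP_ne (hP : ∀ t : ℤ, S t ≠ 0 ∨ S (t+1) ≠ 0) (x : ℤ) : S (prevP S x) ≠ 0 := by
  unfold prevP
  split_ifs with h
  · exact h
  · rcases hP (x-2) with h' | h'
    · exact h'
    · have e : x - 2 + 1 = x - 1 := by ring
      rw [e] at h'
      exact absurd h' h

lemma nextP_bounds (x : ℤ) : x + 1 ≤ nextP S x ∧ nextP S x ≤ x + 2 := by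
  unfold nextP; split_ifs <;> omega

lemma prevP_bounds (x : ℤ) : x - 2 ≤ prevP S x ∧ prevP S x ≤ x - 1 := by
  unfold prevP; split_ifs <;> omega

lemma fP_ne (hP : ∀ t : ℤ, S t ≠ 0 ∨ S (t+1) ≠ 0) : ∀ n, S (fP S n) ≠ 0 := by
  intro n
  induction n with
  | zero =>
    show S (if S 0 ≠ 0 then 0 else 1) ≠ 0
    split_ifs with h
    · exact h
    · rcases hP 0 with h' | h'
      · exact absurd h' h
      · simpa using h'
  | succ n ih => exact nextP_ne S hP _

lemma gP_ne (hP : ∀ t : ℤ, S t ≠ 0 ∨ S (t+1) ≠ 0) : ∀ n, S (gP S n) ≠ 0 := by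
  intro n
  induction n with
  | zero =>
    show S (if S 0 ≠ 0 then 0 else 1) ≠ 0
    split_ifs with h
    · exact h
    · rcases hP 0 with h' | h'
      · exact absurd h' h
      · simpa using h'
  | succ n ih => exact prevP_ne S hP _

lemma uP_ne (hP : ∀ t : ℤ, S t ≠ 0 ∨ S (t+1) ≠ 0) (n : ℤ) : S (uP S n) ≠ 0 := by
  unfold uP
  split_ifs
  · exact fP_ne S hP _
  · exact gP_ne S hP _

lemma uP_step (n : ℤ) : uP S n + 1 ≤ uP S (n+1) ∧ uP S (n+1) ≤ uP S n + 2 := by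
  rcases le_or_gt 0 n with hn | hn
  · have h1 : uP S n = fP S n.toNat := by unfold uP; rw [if_pos hn]
    have h2 : uP S (n+1) = fP S ((n+1).toNat) := by unfold uP; rw [if_pos (by omega)]
    have h3 : (n+1).toNat = n.toNat + 1 := by omega
    rw [h3] at h2
    have h4 : fP S (n.toNat + 1) = nextP S (fP S n.toNat) := rfl
    rw [h4] at h2
    have := nextP_bounds S (fP S n.toNat)
    omega
  · have h1 : uP S n = gP S ((-n).toNat) := by unfold uP; rw [if_neg (by omega)]
    rcases eq_or_lt_of_le (show n + 1 ≤ 0 by omega) with he | hlt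
    · have h2 : uP S (n+1) = fP S 0 := by
        unfold uP; rw [if_pos (by omega)]
        congr 1
        omega
      have h3 : (-n).toNat = 1 := by omega
      rw [h3] at h1
      have h4 : gP S 1 = prevP S (gP S 0) := rfl
      have h5 : fP S 0 = gP S 0 := rfl
      rw [h4] at h1; rw [h5] at h2
      have := prevP_bounds S (gP S 0)
      omega
    · have h2 : uP S (n+1) = gP S ((-(n+1)).toNat) := by unfold uP; rw [if_neg (by omega)]
      have h3 : (-n).toNat = (-(n+1)).toNat + 1 := by omega
      rw [h3] at h1
      have h4 : gP S ((-(n+1)).toNat + 1) = prevP S (gP S ((-(n+1)).toNat)) := rfl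
      rw [h4] at h1
      have := prevP_bounds S (gP S ((-(n+1)).toNat))
      omega

lemma uP_bounds (m : ℤ) (d : ℕ) :
    uP S m + d ≤ uP S (m + d) ∧ uP S (m + d) ≤ uP S m + 2*d := by
  induction d with
  | zero => simp
  | succ d ih =>
    have h := uP_step S (m + d)
    have e : m + (d+1 : ℕ) = (m + d) + 1 := by push_cast; ring
    rw [e]
    push_cast
    omega

end Aux

/-- For every k ≥ 1, the instance B_k with periods a_i = 2^{i-1}+1 is not
covering-schedulable. -/
theorem Bk_not_schedulable (k : ℕ) (hk : 1 ≤ k) :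
    ¬ Schedulable (fun i : Fin k => (2 : ℤ) ^ (i : ℕ) + 1) := by
  clear hk
  induction k with
  | zero =>
    rintro ⟨S, -⟩
    exact (S 0).elim0
  | succ k ih =>
    rintro ⟨S, hS⟩
    -- gap property
    have hgap : ∀ t t' : ℤ, S t = S t' → t < t' →
        t' < t + ((2:ℤ) ^ ((S t : ℕ)) + 1) → False := by
      intro t t' heq hlt hcl
      have hpos : (0:ℤ) < 2 ^ ((S t : ℕ)) := pow_pos (by norm_num) _
      have h1 : t ∈ {x : ℤ | t ≤ x ∧ x < t + ((2:ℤ) ^ ((S t : ℕ)) + 1) ∧ S x = S t} :=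
        ⟨le_refl _, by linarith, rfl⟩
      have h2 : t' ∈ {x : ℤ | t ≤ x ∧ x < t + ((2:ℤ) ^ ((S t : ℕ)) + 1) ∧ S x = S t} :=
        ⟨hlt.le, hcl, heq.symm⟩
      have := hS (S t) t h1 h2
      omega
    -- color 0 never occupies two adjacent slots
    have hP : ∀ t : ℤ, S t ≠ 0 ∨ S (t+1) ≠ 0 := by
      intro t
      by_contra h
      push_neg at h
      obtain ⟨h1, h2⟩ := h
      have heq : S t = S (t+1) := by rw [h1, h2]
      have hv : ((S t : ℕ)) = 0 := by rw [h1]; rfl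
      exact hgap t (t+1) heq (by omega) (by rw [hv]; norm_num)
    -- the induced schedule
    set u : ℤ → ℤ := uP S with hu
    have hune : ∀ n : ℤ, S (u n) ≠ 0 := fun n => uP_ne S hP n
    have hudist : ∀ m m' : ℤ, m < m' →
        u m + (m' - m) ≤ u m' ∧ u m' ≤ u m + 2 * (m' - m) := by
      intro m m' hlt
      have hd : m' = m + ((m' - m).toNat : ℤ) := by omega
      have := uP_bounds S m ((m' - m).toNat)
      rw [← hd, ← hu] at this
      omega
    set T : ℤ → Fin k := fun n => (S (u n)).pred (hune n) with hT
    have hTS : ∀ n : ℤ, S (u n) = (T n).succ := by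
      intro n
      rw [hT]
      exact (Fin.succ_pred _ _).symm
    apply ih
    refine ⟨T, ?_⟩
    intro i m t ht t' ht'
    simp only [Set.mem_setOf_eq] at ht ht'
    obtain ⟨hm1, hlt1, hT1⟩ := ht
    obtain ⟨hm2, hlt2, hT2⟩ := ht'
    by_contra hne
    -- wlog t < t'
    have key : ∀ x y : ℤ, x < y → m ≤ x → y < m + ((2:ℤ) ^ (i : ℕ) + 1) →
        T x = i → T y = i → False := by
      intro x y hxy hmx hym hTx hTy
      have hSx : S (u x) = i.succ := by rw [hTS x, hTx]
      have hSy : S (u y) = i.succ := by rw [hTS y, hTy]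
      have heq : S (u x) = S (u y) := by rw [hSx, hSy]
      have hval : ((S (u x) : ℕ)) = (i : ℕ) + 1 := by rw [hSx]; exact Fin.val_succ i
      have hd := hudist x y hxy
      have hux : u x < u y := by omega
      -- gap for S gives 2^(i+1)+1 ≤ u y - u x
      have hgap2 : u x + ((2:ℤ) ^ ((i:ℕ)+1) + 1) ≤ u y := by
        by_contra hc
        push_neg at hc
        exact hgap (u x) (u y) heq hux (by rw [hval]; exact hc)
      have hpow : (2:ℤ) ^ ((i:ℕ)+1) = 2 * 2 ^ (i:ℕ) := by ring
      -- y - x ≤ 2^i  (from window), u y - u x ≤ 2 (y - x)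
      have hwin : y - x ≤ (2:ℤ) ^ (i:ℕ) := by omega
      omega
    rcases lt_or_gt_of_ne hne with h | h
    · exact key t t' h hm1 hlt2 hT1 hT2
    · exact key t' t h hm2 hlt1 hT2 hT1
end

section
/- For every integer p ≥ 3, (Σ_{i=p+1}^∞ 1/(2^{i-1}+1)) · (2^{p+1}+1)/3 ≥ (1/3)(4 - 1/(2^p+1)) > α*, where α* = Σ_{i=1}^∞ 1/(2^{i-1}+1). -/
/-- For every p ≥ 3, the tail sum bound
(∑_{i=p+1}^∞ 1/(2^{i-1}+1)) · (2^{p+1}+1)/3 ≥ (1/3)(4 - 1/(2^p+1)) > α*. -/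
theorem case_four (p : ℕ) (hp : 3 ≤ p) (α β : ℝ)
    (hα : HasSum (fun i : ℕ => 1 / ((2 : ℝ) ^ i + 1)) α)
    (hβ : HasSum (fun i : ℕ => 1 / ((2 : ℝ) ^ (p + i) + 1)) β) :
    β * ((2 : ℝ) ^ (p + 1) + 1) / 3 ≥ (1 / 3) * (4 - 1 / ((2 : ℝ) ^ p + 1)) ∧
    (1 / 3) * (4 - 1 / ((2 : ℝ) ^ p + 1)) > α := by
  have hxpos : (0:ℝ) < 2 ^ p := by positivity
  set x : ℝ := 2 ^ p with hx
  have hgeo : HasSum (fun i : ℕ => ((1:ℝ)/2) ^ i) 2 := by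
    have := hasSum_geometric_of_lt_one (r := (1/2:ℝ)) (by norm_num) (by norm_num)
    norm_num at this
    convert this using 1
  -- Part 1: lower bound on β
  have hshift : HasSum (fun i : ℕ => 1 / ((2:ℝ) ^ (p + (i + 1)) + 1)) (β - 1 / (x + 1)) := by
    have hfull : HasSum (fun i : ℕ => 1 / ((2:ℝ) ^ (p + i) + 1))
        ((β - 1 / (x + 1)) + ∑ i ∈ Finset.range 1, 1 / ((2:ℝ) ^ (p + i) + 1)) := by
      have he : (β - 1 / (x + 1)) + ∑ i ∈ Finset.range 1, 1 / ((2:ℝ) ^ (p + i) + 1) = β := by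
        simp [hx]
      rw [he]; exact hβ
    exact (hasSum_nat_add_iff (f := fun i : ℕ => 1 / ((2:ℝ) ^ (p + i) + 1)) 1).mpr hfull
  have hgeo2 : HasSum (fun i : ℕ => ((1:ℝ)/2) ^ i * (1 / ((2:ℝ) ^ (p+1) + 1)))
      (2 * (1 / ((2:ℝ) ^ (p+1) + 1))) := hgeo.mul_right _
  have hβlb : 2 * (1 / ((2:ℝ) ^ (p+1) + 1)) ≤ β - 1 / (x + 1) := by
    refine hasSum_le (fun i => ?_) hgeo2 hshift
    rw [div_pow, one_pow, div_mul_div_comm, one_mul]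
    apply one_div_le_one_div_of_le (by positivity)
    have h1 : (1:ℝ) ≤ 2 ^ i := one_le_pow₀ (by norm_num)
    have he : (2:ℝ) ^ (p + (i + 1)) = 2 ^ i * 2 ^ (p + 1) := by
      rw [← pow_add]; ring_nf
    nlinarith [pow_pos (show (0:ℝ) < 2 by norm_num) (p+1)]
  have h2x : (2:ℝ) ^ (p + 1) = 2 * x := by rw [pow_succ, hx]; ring
  constructor
  · rw [h2x] at hβlb ⊢
    have hxe : (1/(x+1) + 2 * (1/(2*x+1))) * (2*x+1) = 4 - 1/(x+1) := by
      field_simp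
      ring
    have hb : β ≥ 1/(x+1) + 2 * (1/(2*x+1)) := by linarith
    have hmul : β * (2*x+1) ≥ (1/(x+1) + 2 * (1/(2*x+1))) * (2*x+1) :=
      mul_le_mul_of_nonneg_right hb (by linarith)
    rw [hxe] at hmul
    linarith
  -- Part 2: upper bound on α
  · have hαshift : HasSum (fun i : ℕ => 1 / ((2:ℝ) ^ (i + 4) + 1))
        (α - (1/2 + 1/3 + 1/5 + 1/9)) := by
      have hfull : HasSum (fun i : ℕ => 1 / ((2:ℝ) ^ i + 1))
          ((α - (1/2 + 1/3 + 1/5 + 1/9)) + ∑ i ∈ Finset.range 4, 1 / ((2:ℝ) ^ i + 1)) := by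
        have he : (α - (1/2 + 1/3 + 1/5 + 1/9)) + ∑ i ∈ Finset.range 4, 1 / ((2:ℝ) ^ i + 1)
            = α := by
          simp [Finset.sum_range_succ]
          norm_num
        rw [he]; exact hα
      exact (hasSum_nat_add_iff (f := fun i : ℕ => 1 / ((2:ℝ) ^ i + 1)) 4).mpr hfull
    have hgeo3 : HasSum (fun i : ℕ => ((1:ℝ)/2) ^ i * (1/16)) (2 * (1/16)) := hgeo.mul_right _
    have hαub : α - (1/2 + 1/3 + 1/5 + 1/9) ≤ 2 * (1/16) := by
      refine hasSum_le (fun i => ?_) hαshift hgeo3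
      rw [div_pow, one_pow, div_mul_div_comm, one_mul]
      apply one_div_le_one_div_of_le (by positivity)
      have he : (2:ℝ) ^ (i + 4) = 2 ^ i * 16 := by
        rw [pow_add]; norm_num
      nlinarith [pow_pos (show (0:ℝ) < 2 by norm_num) i]
    have hx8 : (8:ℝ) ≤ x := by
      rw [hx]
      calc (8:ℝ) = 2 ^ 3 := by norm_num
        _ ≤ 2 ^ p := pow_le_pow_right₀ (by norm_num) hp
    have h19 : 1 / (x + 1) ≤ 1 / 9 := by
      apply one_div_le_one_div_of_le <;> linarith
    have : α ≤ 457/360 := by linarith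
    linarith
end

section
/- Suppose A = (a_1,…,a_k) is a nondecreasing instance of positive integers that is not covering-schedulable, with Σ_i 1/a_i ≥ α*, and suppose that for each i ∈ [p] the prefix (a_1,…,a_i) is not covering-schedulable while each a_j ≤ 2^j for j ≤ p. Then a_i ∈ [2^{i-1}+1, 2^i] for all i ∈ [p]. (Claim 1, first part: if a_1 ≤ 2,…,a_{i-1} ≤ 2^{i-1}, (2,4,…,2^{i-1},2^{i-1}) is schedulable, and (a_1,…,a_i) is unschedulable, then a_i ≥ 2^{i-1}+1.) -/
/-- Basic facts about the residue used by the binary ruler schedule. -/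
private lemma ruler_aux (n : ℕ) (t : ℤ) :
    0 ≤ t % 2 ^ n ∧ (t % 2 ^ n).toNat < 2 ^ n ∧
      padicValNat 2 ((t % 2 ^ n).toNat + 1) ≤ n := by
  have h2 : (0 : ℤ) < 2 ^ n := by positivity
  have h0 : 0 ≤ t % 2 ^ n := Int.emod_nonneg t (by positivity)
  have h1 : t % 2 ^ n < 2 ^ n := Int.emod_lt_of_pos t h2
  have hrn : (t % 2 ^ n).toNat < 2 ^ n := by
    have : ((t % 2 ^ n).toNat : ℤ) < ((2 ^ n : ℕ) : ℤ) := by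
      rw [Int.toNat_of_nonneg h0]; push_cast; exact h1
    exact_mod_cast this
  refine ⟨h0, hrn, ?_⟩
  set r : ℕ := (t % 2 ^ n).toNat with hr
  have hdvd : (2 : ℕ) ^ padicValNat 2 (r + 1) ∣ r + 1 := pow_padicValNat_dvd
  have hle1 : (2 : ℕ) ^ padicValNat 2 (r + 1) ≤ r + 1 :=
    Nat.le_of_dvd (Nat.succ_pos r) hdvd
  have : (2 : ℕ) ^ padicValNat 2 (r + 1) ≤ 2 ^ n := le_trans hle1 (by omega)
  exact (Nat.pow_le_pow_iff_right one_lt_two).mp this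

/-- Key divisibility: if two days get the same ruler value `j`, then they are
congruent modulo `2 ^ min (j+1) n`. -/
private lemma ruler_key (n : ℕ) (t₁ t₂ : ℤ)
    (h : padicValNat 2 ((t₁ % 2 ^ n).toNat + 1) =
         padicValNat 2 ((t₂ % 2 ^ n).toNat + 1)) :
    (2 : ℤ) ^ (min (padicValNat 2 ((t₁ % 2 ^ n).toNat + 1) + 1) n) ∣ t₁ - t₂ := by
  haveI : Fact (Nat.Prime 2) := ⟨Nat.prime_two⟩
  obtain ⟨h01, h11, hv1⟩ := ruler_aux n t₁
  obtain ⟨h02, h12, hv2⟩ := ruler_aux n t₂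
  set r₁ : ℕ := (t₁ % 2 ^ n).toNat with hr₁
  set r₂ : ℕ := (t₂ % 2 ^ n).toNat with hr₂
  set j : ℕ := padicValNat 2 (r₁ + 1) with hj
  have hcast₁ : ((r₁ : ℤ)) = t₁ % 2 ^ n := Int.toNat_of_nonneg h01
  have hcast₂ : ((r₂ : ℤ)) = t₂ % 2 ^ n := Int.toNat_of_nonneg h02
  have hmod₁ : (2 : ℤ) ^ n ∣ t₁ - r₁ := by
    refine ⟨t₁ / 2 ^ n, ?_⟩
    rw [hcast₁]
    have := Int.mul_ediv_add_emod t₁ (2 ^ n)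
    linarith
  have hmod₂ : (2 : ℤ) ^ n ∣ t₂ - r₂ := by
    refine ⟨t₂ / 2 ^ n, ?_⟩
    rw [hcast₂]
    have := Int.mul_ediv_add_emod t₂ (2 ^ n)
    linarith
  rcases lt_or_ge j n with hjn | hjn
  · rw [min_eq_left (by omega)]
    obtain ⟨u₁, hu₁⟩ : (2 : ℕ) ^ j ∣ r₁ + 1 := pow_padicValNat_dvd
    obtain ⟨u₂, hu₂⟩ : (2 : ℕ) ^ j ∣ r₂ + 1 := by
      rw [show j = padicValNat 2 (r₂ + 1) from h]; exact pow_padicValNat_dvd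
    have hnd₁ : ¬ (2 : ℕ) ^ (j + 1) ∣ r₁ + 1 :=
      pow_succ_padicValNat_not_dvd (Nat.succ_ne_zero r₁)
    have hnd₂ : ¬ (2 : ℕ) ^ (j + 1) ∣ r₂ + 1 := by
      have := pow_succ_padicValNat_not_dvd (p := 2) (n := r₂ + 1) (Nat.succ_ne_zero r₂)
      rwa [← h] at this
    have hou₁ : Odd u₁ := by
      rcases Nat.even_or_odd u₁ with he | ho
      · obtain ⟨w, hw⟩ := he
        exact absurd ⟨w, by rw [hu₁, hw]; ring⟩ hnd₁
      · exact ho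
    have hou₂ : Odd u₂ := by
      rcases Nat.even_or_odd u₂ with he | ho
      · obtain ⟨w, hw⟩ := he
        exact absurd ⟨w, by rw [hu₂, hw]; ring⟩ hnd₂
      · exact ho
    have heven : Even ((u₁ : ℤ) - u₂) :=
      (Int.odd_coe_nat u₁ |>.mpr hou₁).sub_odd (Int.odd_coe_nat u₂ |>.mpr hou₂)
    obtain ⟨v, hv⟩ := heven
    have e1 : (r₁ : ℤ) + 1 = 2 ^ j * u₁ := by exact_mod_cast congrArg (Nat.cast : ℕ → ℤ) hu₁
    have e2 : (r₂ : ℤ) + 1 = 2 ^ j * u₂ := by exact_mod_cast congrArg (Nat.cast : ℕ → ℤ) hu₂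
    have hrdvd : (2 : ℤ) ^ (j + 1) ∣ (r₁ : ℤ) - r₂ := by
      refine ⟨v, ?_⟩
      linear_combination e1 - e2 + (2 : ℤ) ^ j * hv
    have d₁ : (2 : ℤ) ^ (j + 1) ∣ t₁ - r₁ := dvd_trans (pow_dvd_pow 2 (by omega)) hmod₁
    have d₂ : (2 : ℤ) ^ (j + 1) ∣ t₂ - r₂ := dvd_trans (pow_dvd_pow 2 (by omega)) hmod₂
    have hsplit : t₁ - t₂ = (t₁ - r₁) - (t₂ - r₂) + ((r₁ : ℤ) - r₂) := by ring
    rw [hsplit]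
    exact dvd_add (dvd_sub d₁ d₂) hrdvd
  · rw [min_eq_right (by omega)]
    have hjn' : j = n := le_antisymm hv1 hjn
    have hd₁ : (2 : ℕ) ^ n ∣ r₁ + 1 := by rw [← hjn']; exact pow_padicValNat_dvd
    have hd₂ : (2 : ℕ) ^ n ∣ r₂ + 1 := by
      rw [← hjn', show j = padicValNat 2 (r₂ + 1) from h]; exact pow_padicValNat_dvd
    have he₁ : r₁ + 1 = 2 ^ n :=
      Nat.le_antisymm (by omega) (Nat.le_of_dvd (Nat.succ_pos r₁) hd₁)
    have he₂ : r₂ + 1 = 2 ^ n :=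
      Nat.le_antisymm (by omega) (Nat.le_of_dvd (Nat.succ_pos r₂) hd₂)
    have hrr : r₁ = r₂ := by omega
    have hsplit : t₁ - t₂ = (t₁ - r₁) - (t₂ - r₂) + ((r₁ : ℤ) - r₂) := by ring
    rw [hrr] at hmod₁
    rw [hsplit, hrr, sub_self, add_zero]
    exact dvd_sub hmod₁ hmod₂

/-- Any instance on `n+1` agents with `b j ≤ 2 ^ min (j+1) n` is schedulable,
via the binary ruler schedule. -/
private lemma ruler_sched (n : ℕ) (b : Fin (n + 1) → ℤ)
    (hb : ∀ j : Fin (n + 1), b j ≤ 2 ^ (min ((j : ℕ) + 1) n)) : Schedulable b := by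
  refine ⟨fun t => ⟨padicValNat 2 ((t % 2 ^ n).toNat + 1),
    Nat.lt_succ_of_le (ruler_aux n t).2.2⟩, ?_⟩
  intro jj m t₁ ht₁ t₂ ht₂
  simp only [Set.mem_setOf_eq] at ht₁ ht₂
  obtain ⟨hm₁, hu₁, hS₁⟩ := ht₁
  obtain ⟨hm₂, hu₂, hS₂⟩ := ht₂
  have hval : padicValNat 2 ((t₁ % 2 ^ n).toNat + 1) =
      padicValNat 2 ((t₂ % 2 ^ n).toNat + 1) := by
    have h12 := hS₁.trans hS₂.symm
    simpa using congrArg Fin.val h12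
  have hdvd := ruler_key n t₁ t₂ hval
  have hjv : (jj : ℕ) = padicValNat 2 ((t₁ % 2 ^ n).toNat + 1) := by
    rw [← hS₁]
  have hb' := hb jj
  rw [hjv] at hb'
  have h0 : t₁ - t₂ = 0 := by
    refine Int.eq_zero_of_abs_lt_dvd hdvd ?_
    rw [abs_lt]
    constructor <;> linarith
  linarith

/-- Claim 1, first part: under the stated hypotheses, a_i ∈ [2^{i-1}+1, 2^i]
for all i ∈ [p] (agents are 0-indexed here). -/
theorem claim_one {k p : ℕ} (hpk : p ≤ k) (a : Fin k → ℤ)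
    (hpos : ∀ i, 0 < a i) (hmono : Monotone a)
    (α : ℝ) (hα : HasSum (fun i : ℕ => 1 / ((2 : ℝ) ^ i + 1)) α)
    (hdens : α ≤ ∑ i, (1 : ℝ) / (a i : ℝ))
    (huns : ¬ Schedulable a)
    (hpre : ∀ i : ℕ, 1 ≤ i → (hi : i ≤ p) →
      ¬ Schedulable (fun j : Fin i => a ⟨j.1, by omega⟩))
    (hle : ∀ j : Fin k, (j : ℕ) < p → a j ≤ 2 ^ ((j : ℕ) + 1)) :
    ∀ i : Fin k, (i : ℕ) < p →
      (2 : ℤ) ^ (i : ℕ) + 1 ≤ a i ∧ a i ≤ 2 ^ ((i : ℕ) + 1) := by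
  intro i hi
  refine ⟨?_, hle i hi⟩
  by_contra hcon
  push_neg at hcon
  have hai : a i ≤ 2 ^ (i : ℕ) := by linarith
  set n := (i : ℕ) with hn
  refine hpre (n + 1) (by omega) (by omega) ?_
  refine ruler_sched n _ ?_
  intro j
  have hjlt : (j : ℕ) < n + 1 := j.isLt
  show a ⟨(j : ℕ), by omega⟩ ≤ 2 ^ (min ((j : ℕ) + 1) n)
  rcases lt_or_ge (j : ℕ) n with hjn | hjn
  · rw [min_eq_left (by omega)]
    exact hle ⟨(j : ℕ), by omega⟩ (by show (j : ℕ) < p; omega)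
  · have hje : (j : ℕ) = n := by omega
    rw [min_eq_right (by omega)]
    have heq : (⟨(j : ℕ), by omega⟩ : Fin k) = i := Fin.ext (by simp [hje, hn])
    rw [heq]
    exact hai
end

section
/- Let A = (a_1,…,a_k) be an instance with k ≥ 2, and let A' be obtained from A by replacing the two agents with periods a_{k-1} ≤ a_k by a single agent with period min{a_{k-1}, ⌈a_k/2⌉}. If A' is covering-schedulable, then A is covering-schedulable. -/
lemma spacing_of_sched {k : ℕ} (a : Fin k → ℤ) (S : ℤ → Fin k)
    (hS : ∀ (i : Fin k) (m : ℤ),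
      Set.Subsingleton {t : ℤ | m ≤ t ∧ t < m + a i ∧ S t = i}) :
    ∀ (i : Fin k) (t1 t2 : ℤ), S t1 = i → S t2 = i → t1 < t2 → a i ≤ t2 - t1 := by
  intro i t1 t2 h1 h2 hlt
  by_contra hcon
  push_neg at hcon
  have := hS i t1 (x := t1) (y := t2) ⟨le_refl _, by omega, h1⟩ ⟨by omega, by omega, h2⟩
  omega

lemma sched_of_spacing {k : ℕ} (a : Fin k → ℤ) (S : ℤ → Fin k)
    (hS : ∀ (i : Fin k) (t1 t2 : ℤ), S t1 = i → S t2 = i → t1 < t2 → a i ≤ t2 - t1) :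
    Schedulable a := by
  refine ⟨S, fun i m t1 ht1 t2 ht2 => ?_⟩
  obtain ⟨h1a, h1b, h1c⟩ := ht1
  obtain ⟨h2a, h2b, h2c⟩ := ht2
  rcases lt_trichotomy t1 t2 with hh | hh | hh
  · have := hS i t1 t2 h1c h2c hh; omega
  · exact hh
  · have := hS i t2 t1 h2c h1c hh; omega

lemma two_ceil_half (n : ℤ) : n ≤ 2 * ⌈(n : ℚ) / 2⌉ := by
  have h := Int.le_ceil ((n : ℚ) / 2)
  have h2 : (n : ℚ) ≤ 2 * (⌈(n : ℚ) / 2⌉ : ℤ) := by linarith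
  exact_mod_cast h2

lemma alternate (T : ℤ → Prop) (b : ℤ)
    (hsp : ∀ t1 t2, T t1 → T t2 → t1 < t2 → b ≤ t2 - t1) :
    ∃ φ : ℤ → Bool, ∀ t1 t2, T t1 → T t2 → t1 < t2 → t2 - t1 < 2 * b →
      φ t1 ≠ φ t2 := by
  classical
  set adj : {t : ℤ // T t} → {t : ℤ // T t} → Prop :=
    fun s t => |(s : ℤ) - (t : ℤ)| < 2 * b with hadj
  set rep : {t : ℤ // T t} → {t : ℤ // T t} :=
    fun t => (Quotient.mk (Relation.EqvGen.setoid adj) t).out with hrepdef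
  have hrep : ∀ s t : {t : ℤ // T t}, adj s t → rep s = rep t := by
    intro s t h
    simp only [hrepdef]
    exact congrArg Quotient.out (Quotient.sound (Relation.EqvGen.rel _ _ h))
  set N : ℤ → ℤ → ℕ := fun x y => ((Finset.Ico x y).filter (fun u => T u)).card with hN
  set d : {t : ℤ // T t} → ℤ :=
    fun t => if ((rep t : ℤ)) ≤ (t : ℤ) then (N (rep t) t : ℤ) else -(N t (rep t) : ℤ) with hd
  have hnomid : ∀ (t1 t2 u : ℤ), T t1 → T t2 → T u → t1 < t2 → t2 - t1 < 2 * b →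
      ¬(t1 < u ∧ u < t2) := by
    intro t1 t2 u h1 h2 hu hlt hgap hcon
    have g1 := hsp t1 u h1 hu hcon.1
    have g2 := hsp u t2 hu h2 hcon.2
    omega
  have hN1 : ∀ (t1 t2 : ℤ), T t1 → T t2 → t1 < t2 → t2 - t1 < 2 * b → N t1 t2 = 1 := by
    intro t1 t2 h1 h2 hlt hgap
    have heq : (Finset.Ico t1 t2).filter (fun u => T u) = {t1} := by
      apply Finset.eq_singleton_iff_unique_mem.mpr
      refine ⟨?_, ?_⟩
      · simp only [Finset.mem_filter, Finset.mem_Ico]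
        exact ⟨⟨le_refl _, hlt⟩, h1⟩
      · intro u hu
        simp only [Finset.mem_filter, Finset.mem_Ico] at hu
        by_contra hne
        exact hnomid t1 t2 u h1 h2 hu.2 hlt hgap ⟨lt_of_le_of_ne hu.1.1 (Ne.symm hne), hu.1.2⟩
    simp only [hN, heq, Finset.card_singleton]
  have hNadd : ∀ x y z : ℤ, x ≤ y → y ≤ z → N x z = N x y + N y z := by
    intro x y z h1 h2
    simp only [hN]
    rw [← Finset.Ico_union_Ico_eq_Ico h1 h2, Finset.filter_union,
      Finset.card_union_of_disjoint
        (Finset.disjoint_filter_filter (Finset.Ico_disjoint_Ico_consecutive x y z))]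
  have hstep : ∀ t1 t2 : {t : ℤ // T t}, (t1 : ℤ) < (t2 : ℤ) →
      (t2 : ℤ) - (t1 : ℤ) < 2 * b → d t2 = d t1 + 1 := by
    intro t1 t2 hlt hgap
    have hr : rep t1 = rep t2 := hrep t1 t2 (by
      show |(t1 : ℤ) - (t2 : ℤ)| < 2 * b
      rw [abs_sub_lt_iff]
      omega)
    have hrT : T ((rep t1 : ℤ)) := (rep t1).2
    have h1 := hN1 t1 t2 t1.2 t2.2 hlt hgap
    simp only [hd, ← hr]
    rcases le_or_gt ((rep t1 : ℤ)) (t1 : ℤ) with hle | hgt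
    · rw [if_pos hle, if_pos (le_trans hle hlt.le)]
      have := hNadd (rep t1) t1 t2 hle hlt.le
      omega
    · have hge : (t2 : ℤ) ≤ (rep t1 : ℤ) := by
        by_contra hcon
        push_neg at hcon
        exact hnomid t1 t2 (rep t1) t1.2 t2.2 hrT hlt hgap ⟨hgt, hcon⟩
      rw [if_neg (not_le.mpr hgt)]
      have hadd := hNadd t1 t2 (rep t1) hlt.le hge
      rcases eq_or_lt_of_le hge with he | hl
      · rw [if_pos (le_of_eq he.symm)]
        have h0 : N ((rep t1 : ℤ)) (t2 : ℤ) = 0 := by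
          simp only [hN, ← he, Finset.Ico_self, Finset.filter_empty, Finset.card_empty]
        have h0' : N (t2 : ℤ) ((rep t1 : ℤ)) = 0 := by
          simp only [hN, ← he, Finset.Ico_self, Finset.filter_empty, Finset.card_empty]
        omega
      · rw [if_neg (not_le.mpr hl)]
        omega
  refine ⟨fun t => if h : T t then decide (Even (d ⟨t, h⟩)) else false, ?_⟩
  intro t1 t2 h1 h2 hlt hgap
  simp only [dif_pos h1, dif_pos h2]
  have hs := hstep ⟨t1, h1⟩ ⟨t2, h2⟩ hlt hgap
  intro heq
  rw [decide_eq_decide] at heq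
  rw [hs, Int.even_add_one] at heq
  tauto

/-- Folding: replacing the last two agents of A (periods a_{k-1} ≤ a_k) by a single
agent of period min{a_{k-1}, ⌈a_k/2⌉} preserves unschedulability; equivalently,
if the folded instance A' is schedulable, so is A. -/
theorem schedulable_of_fold (k : ℕ) (a : Fin (k + 2) → ℤ)
    (hpos : ∀ i, 0 < a i) (hmono : Monotone a)
    (h : Schedulable (fun i : Fin (k + 1) =>
      if (i : ℕ) < k then a ⟨i, by omega⟩
      else min (a ⟨k, by omega⟩) ⌈(a ⟨k + 1, by omega⟩ : ℚ) / 2⌉)) :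
    Schedulable a := by
  classical
  have pk : k < k + 2 := by omega
  have pk1 : k + 1 < k + 2 := by omega
  obtain ⟨S', hS'0⟩ := h
  have hS' := spacing_of_sched _ _ hS'0
  have hlastspace : ∀ t1 t2 : ℤ, S' t1 = Fin.last k → S' t2 = Fin.last k → t1 < t2 →
      min (a ⟨k, pk⟩) ⌈(a ⟨k + 1, pk1⟩ : ℚ) / 2⌉ ≤ t2 - t1 := by
    intro t1 t2 h1 h2 hlt
    have key := hS' (Fin.last k) t1 t2 h1 h2 hlt
    simp only [Fin.val_last, lt_self_iff_false, if_false] at key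
    exact key
  have hsmallspace : ∀ (j : Fin (k + 1)) (hj : (j : ℕ) < k) (t1 t2 : ℤ),
      S' t1 = j → S' t2 = j → t1 < t2 → a ⟨(j : ℕ), by omega⟩ ≤ t2 - t1 := by
    intro j hj t1 t2 h1 h2 hlt
    have key := hS' j t1 t2 h1 h2 hlt
    rw [if_pos hj] at key
    exact key
  have hmk : a ⟨k, pk⟩ ≤ a ⟨k + 1, pk1⟩ := hmono (by simp [Fin.mk_le_mk])
  have hceil : a ⟨k + 1, pk1⟩ ≤ 2 * ⌈(a ⟨k + 1, pk1⟩ : ℚ) / 2⌉ :=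
    two_ceil_half _
  by_cases hc : a ⟨k, pk⟩ ≤ ⌈(a ⟨k + 1, pk1⟩ : ℚ) / 2⌉
  · -- fold period is a_k : assign all folded slots to agent k
    apply sched_of_spacing a (fun t => Fin.castSucc (S' t))
    intro i t1 t2 h1 h2 hlt
    have hj : S' t1 = S' t2 := Fin.castSucc_injective _ (h1.trans h2.symm)
    by_cases hjk : (S' t1 : ℕ) < k
    · have key := hsmallspace (S' t1) hjk t1 t2 rfl hj.symm hlt
      rw [← h1, show Fin.castSucc (S' t1) = ⟨(S' t1 : ℕ), by omega⟩ from Fin.ext (by simp)]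
      exact key
    · have hisLt := (S' t1).isLt
      have hvk : (S' t1 : ℕ) = k := by omega
      have hL : S' t1 = Fin.last k := Fin.ext (by rw [Fin.val_last]; exact hvk)
      have key := hlastspace t1 t2 hL (hj ▸ hL) hlt
      rw [min_eq_left hc] at key
      rw [← h1, show Fin.castSucc (S' t1) = ⟨k, pk⟩ from Fin.ext (by simp [hvk])]
      exact key
  · -- fold period is ⌈a_{k+1}/2⌉ : alternate the folded slots between agents k and k+1
    push_neg at hc
    have hsp2 : ∀ t1 t2 : ℤ, S' t1 = Fin.last k → S' t2 = Fin.last k → t1 < t2 →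
        ⌈(a ⟨k + 1, pk1⟩ : ℚ) / 2⌉ ≤ t2 - t1 := by
      intro t1 t2 h1 h2 hlt
      have := hlastspace t1 t2 h1 h2 hlt
      rw [min_eq_right hc.le] at this
      exact this
    obtain ⟨φ, hφ⟩ := alternate (fun t => S' t = Fin.last k)
      (⌈(a ⟨k + 1, pk1⟩ : ℚ) / 2⌉) hsp2
    apply sched_of_spacing a (fun t =>
      if S' t = Fin.last k then
        (if φ t then (⟨k + 1, pk1⟩ : Fin (k + 2)) else ⟨k, pk⟩)
      else Fin.castSucc (S' t))
    intro i t1 t2 h1 h2 hlt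
    by_cases e1 : S' t1 = Fin.last k <;> by_cases e2 : S' t2 = Fin.last k
    · rw [if_pos e1] at h1
      rw [if_pos e2] at h2
      by_cases p1 : φ t1 = true <;> by_cases p2 : φ t2 = true
      · rw [if_pos p1] at h1
        rw [if_pos p2] at h2
        rw [← h1]
        by_contra hcon
        push_neg at hcon
        have hg : t2 - t1 < 2 * ⌈(a ⟨k + 1, pk1⟩ : ℚ) / 2⌉ := by omega
        exact hφ t1 t2 e1 e2 hlt hg (p1.trans p2.symm)
      · rw [if_pos p1] at h1
        rw [if_neg p2] at h2
        have hv : (k + 1 : ℕ) = k := (congrArg Fin.val (h1.trans h2.symm) : _)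
        omega
      · rw [if_neg p1] at h1
        rw [if_pos p2] at h2
        have hv : (k : ℕ) = k + 1 := (congrArg Fin.val (h1.trans h2.symm) : _)
        omega
      · rw [if_neg p1] at h1
        rw [if_neg p2] at h2
        rw [← h1]
        by_contra hcon
        push_neg at hcon
        have hg : t2 - t1 < 2 * ⌈(a ⟨k + 1, pk1⟩ : ℚ) / 2⌉ := by omega
        simp only [Bool.not_eq_true] at p1 p2
        exact hφ t1 t2 e1 e2 hlt hg (p1.trans p2.symm)
    · rw [if_pos e1] at h1
      rw [if_neg e2] at h2
      have hv2 : (i : ℕ) = (S' t2 : ℕ) := by rw [← h2]; simp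
      have hne : (S' t2 : ℕ) ≠ k := fun hh => e2 (Fin.ext (by rw [Fin.val_last]; exact hh))
      have hisLt := (S' t2).isLt
      by_cases p1 : φ t1 = true
      · rw [if_pos p1] at h1
        have hv1 : (k + 1 : ℕ) = (i : ℕ) := (congrArg Fin.val h1 : _)
        omega
      · rw [if_neg p1] at h1
        have hv1 : (k : ℕ) = (i : ℕ) := (congrArg Fin.val h1 : _)
        omega
    · rw [if_neg e1] at h1
      rw [if_pos e2] at h2
      have hv1 : (i : ℕ) = (S' t1 : ℕ) := by rw [← h1]; simp
      have hne : (S' t1 : ℕ) ≠ k := fun hh => e1 (Fin.ext (by rw [Fin.val_last]; exact hh))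
      have hisLt := (S' t1).isLt
      by_cases p2 : φ t2 = true
      · rw [if_pos p2] at h2
        have hv2 : (k + 1 : ℕ) = (i : ℕ) := (congrArg Fin.val h2 : _)
        omega
      · rw [if_neg p2] at h2
        have hv2 : (k : ℕ) = (i : ℕ) := (congrArg Fin.val h2 : _)
        omega
    · rw [if_neg e1] at h1
      rw [if_neg e2] at h2
      have hj : S' t1 = S' t2 := Fin.castSucc_injective _ (h1.trans h2.symm)
      have hisLt := (S' t1).isLt
      have hne : (S' t1 : ℕ) ≠ k := fun hh => e1 (Fin.ext (by rw [Fin.val_last]; exact hh))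
      have hjk : (S' t1 : ℕ) < k := by omega
      have key := hsmallspace (S' t1) hjk t1 t2 rfl hj.symm hlt
      rw [← h1, show Fin.castSucc (S' t1) = ⟨(S' t1 : ℕ), by omega⟩ from Fin.ext (by simp)]
      exact key
end

section
/- Let A = (a_1,…,a_k) be an unschedulable instance of positive integers, let p ≥ 0, and suppose agent i is employed exactly once every 2^i days for i ∈ [p] with a_i ≤ 2^i, and define b_i = ⌈a_{p+i}/2^p⌉ for i ∈ [k-p]. If B = (b_1,…,b_{k-p}) is covering-schedulable, then A is covering-schedulable. (Claim 2: the dilation-by-2^p construction transfers schedulability from B to A.) -/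
/-- Claim 2: the dilation-by-2^p construction transfers schedulability from
B = (⌈a_{p+i}/2^p⌉)_i to A, provided a_i ≤ 2^i for i ∈ [p] (0-indexed: a_i ≤ 2^{i+1}). -/
theorem claim_two {k p : ℕ} (hpk : p ≤ k) (a : Fin k → ℤ) (hpos : ∀ i, 0 < a i)
    (hle : ∀ i : Fin k, (i : ℕ) < p → a i ≤ 2 ^ ((i : ℕ) + 1))
    (hB : Schedulable (fun i : Fin (k - p) =>
      ⌈(a ⟨p + i.1, by have := i.2; omega⟩ : ℚ) / 2 ^ p⌉)) :
    Schedulable a := by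
  classical
  obtain ⟨S', hS'⟩ := hB
  set v : ℤ → ℕ := fun t => padicValNat 2 t.natAbs with hv
  -- basic facts about v
  have hvdvd : ∀ t : ℤ, (2 : ℤ) ^ (v t) ∣ t := by
    intro t
    have h1 : (2 : ℕ) ^ (v t) ∣ t.natAbs := pow_padicValNat_dvd
    have h2 : (2 : ℤ) ^ (v t) ∣ (t.natAbs : ℤ) := by exact_mod_cast Int.natCast_dvd_natCast.2 h1
    exact (Int.dvd_natAbs).1 h2
  have hvndvd : ∀ t : ℤ, t ≠ 0 → ¬ (2 : ℤ) ^ (v t + 1) ∣ t := by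
    intro t ht hdvd
    have h1 : (2 : ℕ) ^ (v t + 1) ∣ t.natAbs := by
      have := (Int.dvd_natAbs).2 hdvd
      exact_mod_cast this
    exact pow_succ_padicValNat_not_dvd (Int.natAbs_ne_zero.2 ht) h1
  have hvlt : ∀ t : ℤ, ¬ (2 : ℤ) ^ p ∣ t → v t < p := by
    intro t h
    by_contra hge
    push_neg at hge
    exact h (dvd_trans (pow_dvd_pow 2 hge) (hvdvd t))
  have hodd : ∀ t : ℤ, t ≠ 0 → ∃ u : ℤ, t = 2 ^ (v t) * u ∧ ¬ (2 : ℤ) ∣ u := by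
    intro t ht
    obtain ⟨u, hu⟩ := hvdvd t
    refine ⟨u, hu, fun ⟨w, hw⟩ => hvndvd t ht ⟨w, ?_⟩⟩
    calc t = 2 ^ (v t) * u := hu
      _ = 2 ^ (v t) * (2 * w) := by rw [hw]
      _ = 2 ^ (v t + 1) * w := by ring
  refine ⟨fun t => if h : (2 : ℤ) ^ p ∣ t then
      ⟨p + (S' (t / 2 ^ p)).1, by have := (S' (t / 2 ^ p)).isLt; omega⟩
    else ⟨v t, by have := hvlt t h; omega⟩, ?_⟩
  intro i m t1 ht1 t2 ht2
  simp only [Set.mem_setOf_eq] at ht1 ht2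
  obtain ⟨hm1, hu1, hs1⟩ := ht1
  obtain ⟨hm2, hu2, hs2⟩ := ht2
  by_cases hip : (i : ℕ) < p
  · -- small agents
    have key : ∀ t : ℤ, (if h : (2 : ℤ) ^ p ∣ t then
        (⟨p + (S' (t / 2 ^ p)).1, by have := (S' (t / 2 ^ p)).isLt; omega⟩ : Fin k)
      else ⟨v t, by have := hvlt t h; omega⟩) = i → ¬ (2 : ℤ) ^ p ∣ t ∧ v t = (i : ℕ) := by
      intro t ht
      by_cases h : (2 : ℤ) ^ p ∣ t
      · rw [dif_pos h] at ht
        have := congrArg Fin.val ht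
        simp only at this
        omega
      · rw [dif_neg h] at ht
        have := congrArg Fin.val ht
        exact ⟨h, this⟩
    obtain ⟨hnd1, hv1⟩ := key t1 hs1
    obtain ⟨hnd2, hv2⟩ := key t2 hs2
    have ht1ne : t1 ≠ 0 := fun h0 => hnd1 (h0 ▸ dvd_zero _)
    have ht2ne : t2 ≠ 0 := fun h0 => hnd2 (h0 ▸ dvd_zero _)
    obtain ⟨u1, hu1', ho1⟩ := hodd t1 ht1ne
    obtain ⟨u2, hu2', ho2⟩ := hodd t2 ht2ne
    rw [hv1] at hu1'
    rw [hv2] at hu2'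
    have hediff : (2 : ℤ) ∣ u1 - u2 := by omega
    obtain ⟨w, hw⟩ := hediff
    have hPpos : (0 : ℤ) < 2 ^ ((i : ℕ) + 1) := by positivity
    have hdiff : t1 - t2 = 2 ^ ((i : ℕ) + 1) * w := by
      rw [hu1', hu2', pow_succ]
      linear_combination (2 : ℤ) ^ ((i : ℕ)) * hw
    have habs : t1 - t2 < a i ∧ -(a i) < t1 - t2 := by constructor <;> linarith
    have hai : a i ≤ 2 ^ ((i : ℕ) + 1) := hle i hip
    have hw0 : w = 0 := by
      rcases lt_trichotomy w 0 with h | h | h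
      · have h1 : 2 ^ ((i : ℕ) + 1) * w ≤ 2 ^ ((i : ℕ) + 1) * (-1) :=
          mul_le_mul_of_nonneg_left (by omega) (le_of_lt hPpos)
        linarith
      · exact h
      · have h1 : 2 ^ ((i : ℕ) + 1) * 1 ≤ 2 ^ ((i : ℕ) + 1) * w :=
          mul_le_mul_of_nonneg_left (by omega) (le_of_lt hPpos)
        linarith
    rw [hw0, mul_zero] at hdiff
    omega
  · -- large agents
    push_neg at hip
    have key : ∀ t : ℤ, (if h : (2 : ℤ) ^ p ∣ t then
        (⟨p + (S' (t / 2 ^ p)).1, by have := (S' (t / 2 ^ p)).isLt; omega⟩ : Fin k)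
      else ⟨v t, by have := hvlt t h; omega⟩) = i →
        (2 : ℤ) ^ p ∣ t ∧ p + (S' (t / 2 ^ p)).1 = (i : ℕ) := by
      intro t ht
      by_cases h : (2 : ℤ) ^ p ∣ t
      · rw [dif_pos h] at ht
        exact ⟨h, congrArg Fin.val ht⟩
      · rw [dif_neg h] at ht
        have h1 := congrArg Fin.val ht
        have h2 := hvlt t h
        simp only at h1
        omega
    obtain ⟨hd1, hj1⟩ := key t1 hs1
    obtain ⟨hd2, hj2⟩ := key t2 hs2
    clear key hs1 hs2
    set s1 := t1 / 2 ^ p with hs1def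
    set s2 := t2 / 2 ^ p with hs2def
    set j := S' s1 with hjdef
    have hjeq : S' s2 = j := by
      apply Fin.ext
      omega
    have hj2' : (j : ℕ) = (i : ℕ) - p := by omega
    have hjlt : p + (j : ℕ) < k := by have := i.isLt; omega
    have hieq : i = ⟨p + (j : ℕ), hjlt⟩ := by apply Fin.ext; simp; omega
    set b : ℤ := ⌈(a ⟨p + (j : ℕ), by have := j.2; omega⟩ : ℚ) / 2 ^ p⌉ with hbdef
    have hab : a i ≤ 2 ^ p * b := by
      have h1 : ((a ⟨p + (j : ℕ), by have := j.2; omega⟩ : ℤ) : ℚ) / 2 ^ p ≤ (b : ℚ) :=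
        Int.le_ceil _
      have h2 : ((a ⟨p + (j : ℕ), by have := j.2; omega⟩ : ℤ) : ℚ) ≤ 2 ^ p * (b : ℚ) := by
        rw [div_le_iff₀ (by positivity)] at h1
        linarith
      have h3 : a ⟨p + (j : ℕ), by have := j.2; omega⟩ ≤ 2 ^ p * b := by exact_mod_cast h2
      rw [hieq]
      exact h3
    have hbpos : 0 < b := by
      have := hpos i
      have hP : (0 : ℤ) < 2 ^ p := by positivity
      nlinarith
    have ht1eq : t1 = 2 ^ p * s1 := (Int.mul_ediv_cancel' hd1).symm
    have ht2eq : t2 = 2 ^ p * s2 := (Int.mul_ediv_cancel' hd2).symm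
    have hP : (0 : ℤ) < 2 ^ p := by positivity
    have hsb : s1 - s2 < b ∧ s2 - s1 < b := by
      constructor
      · by_contra h
        push_neg at h
        have : 2 ^ p * b ≤ 2 ^ p * (s1 - s2) := by
          exact mul_le_mul_of_nonneg_left h (le_of_lt hP)
        nlinarith [hab]
      · by_contra h
        push_neg at h
        have : 2 ^ p * b ≤ 2 ^ p * (s2 - s1) := by
          exact mul_le_mul_of_nonneg_left h (le_of_lt hP)
        nlinarith [hab]
    have hfin := hS' j (min s1 s2)
    simp only [Set.mem_setOf_eq] at hfin
    have heq : s1 = s2 := hfin ⟨min_le_left _ _, by omega, rfl⟩ ⟨min_le_right _ _, by omega, hjeq⟩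
    rw [ht1eq, ht2eq, heq]
end

section
/- The instance (2, 3, 5, 9) cannot cover 16 consecutive days: there is no S : [0,16) ∩ ℤ → Fin 4 with agent i assigned at most once in any a_i consecutive days, where (a_1,a_2,a_3,a_4) = (2,3,5,9). -/
/-- DFS search: `srch n g0 g1 g2 g3 = true` iff the schedule can be extended
for `n` more days, where `gi` is the number of days since agent `i` was last used. -/
def srch : ℕ → ℕ → ℕ → ℕ → ℕ → Bool
  | 0, _, _, _, _ => true
  | n+1, g0, g1, g2, g3 =>
    (decide (2 ≤ g0) && srch n 1 (g1+1) (g2+1) (g3+1)) ||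
    (decide (3 ≤ g1) && srch n (g0+1) 1 (g2+1) (g3+1)) ||
    (decide (5 ≤ g2) && srch n (g0+1) (g1+1) 1 (g3+1)) ||
    (decide (9 ≤ g3) && srch n (g0+1) (g1+1) (g2+1) 1)

lemma srch_sixteen : srch 16 100 100 100 100 = false := by decide

/-- The instance (2, 3, 5, 9) cannot cover the 16 consecutive days [0, 16). -/
theorem B4_cannot_cover_sixteen_days :
    ¬ ∃ S : ℤ → Fin 4, ∀ (i : Fin 4) (m : ℤ),
      Set.Subsingleton
        {t : ℤ | 0 ≤ t ∧ t < 16 ∧ m ≤ t ∧ t < m + (![2, 3, 5, 9] : Fin 4 → ℤ) i ∧ S t = i} := by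
  rintro ⟨S, hS⟩
  have hpos : ∀ i : Fin 4, 0 < (![2, 3, 5, 9] : Fin 4 → ℤ) i := by
    intro i; fin_cases i <;> norm_num
  -- key: two occurrences of agent i in [0,16) must be ≥ a_i apart
  have key : ∀ (i : Fin 4) (s t : ℤ), 0 ≤ s → s < t → t < 16 →
      S s = i → S t = i → s + (![2, 3, 5, 9] : Fin 4 → ℤ) i ≤ t := by
    intro i s t hs hst ht hSs hSt
    by_contra h
    push_neg at h
    have hsub := hS i s
    have hmem1 : s ∈ {t : ℤ | 0 ≤ t ∧ t < 16 ∧ s ≤ t ∧ t < s + (![2, 3, 5, 9] : Fin 4 → ℤ) i ∧ S t = i} := by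
      refine ⟨hs, by linarith, le_refl _, by linarith [hpos i], hSs⟩
    have hmem2 : t ∈ {t : ℤ | 0 ≤ t ∧ t < 16 ∧ s ≤ t ∧ t < s + (![2, 3, 5, 9] : Fin 4 → ℤ) i ∧ S t = i} := by
      refine ⟨by linarith, ht, le_of_lt hst, h, hSt⟩
    have := hsub hmem1 hmem2
    omega
  have h4 : ∀ x : Fin 4, x = 0 ∨ x = 1 ∨ x = 2 ∨ x = 3 := by decide
  -- invariant-based main induction
  have main : ∀ (k : ℕ) (t : ℤ) (g : Fin 4 → ℕ), t = 16 - k → k ≤ 16 →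
      (∀ i, 16 ≤ g i ∨ (1 ≤ g i ∧ 0 ≤ t - g i ∧ S (t - g i) = i)) →
      srch k (g 0) (g 1) (g 2) (g 3) = true := by
    intro k
    induction k with
    | zero => intro t g _ _ _; simp [srch]
    | succ k ih =>
      intro t g ht hk hinv
      have ht0 : 0 ≤ t := by omega
      have ht16 : t < 16 := by omega
      -- the agent used on day t must have waited long enough
      have hwait : ∀ i : Fin 4, S t = i → ((![2, 3, 5, 9] : Fin 4 → ℤ) i) ≤ (g i : ℤ) := by
        intro i hSt
        rcases hinv i with h16 | ⟨h1, h0, hlast⟩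
        · have : (![2, 3, 5, 9] : Fin 4 → ℤ) i ≤ 9 := by fin_cases i <;> norm_num
          omega
        · have hlt : t - (g i : ℤ) < t := by omega
          have := key i (t - g i) t h0 hlt ht16 hlast hSt
          omega
      have hinv' : ∀ (j : Fin 4) (gj' : ℕ), (gj' = if S t = j then 1 else g j + 1) →
          16 ≤ gj' ∨ (1 ≤ gj' ∧ 0 ≤ (t + 1) - gj' ∧ S ((t + 1) - gj') = j) := by
        intro j gj' hgj'
        by_cases hj : S t = j
        · right
          rw [hgj', if_pos hj]
          have he : (t + 1) - ((1 : ℕ) : ℤ) = t := by push_cast; ring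
          exact ⟨le_refl 1, by omega, by rw [he]; exact hj⟩
        · rcases hinv j with h16 | ⟨h1, h0, hlast⟩
          · left; rw [hgj', if_neg hj]; omega
          · right
            rw [hgj', if_neg hj]
            have he : (t + 1) - ((g j + 1 : ℕ) : ℤ) = t - (g j : ℤ) := by push_cast; ring
            exact ⟨by omega, by rw [he]; exact h0, by rw [he]; exact hlast⟩
      simp only [srch, Bool.or_eq_true, Bool.and_eq_true, decide_eq_true_eq]
      rcases h4 (S t) with hc | hc | hc | hc
      · refine Or.inl (Or.inl (Or.inl ⟨?_, ?_⟩))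
        · have := hwait 0 hc; simpa using this
        · have := ih (t+1) ![1, g 1 + 1, g 2 + 1, g 3 + 1] (by omega) (by omega) ?_
          · simpa using this
          · intro j
            rcases h4 j with hj | hj | hj | hj <;> subst hj
            · exact hinv' 0 1 (by simp [hc])
            · exact hinv' 1 (g 1 + 1) (by simp [hc])
            · exact hinv' 2 (g 2 + 1) (by simp [hc])
            · exact hinv' 3 (g 3 + 1) (by simp [hc])
      · refine Or.inl (Or.inl (Or.inr ⟨?_, ?_⟩))
        · have := hwait 1 hc; simpa using this
        · have := ih (t+1) ![g 0 + 1, 1, g 2 + 1, g 3 + 1] (by omega) (by omega) ?_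
          · simpa using this
          · intro j
            rcases h4 j with hj | hj | hj | hj <;> subst hj
            · exact hinv' 0 (g 0 + 1) (by simp [hc])
            · exact hinv' 1 1 (by simp [hc])
            · exact hinv' 2 (g 2 + 1) (by simp [hc])
            · exact hinv' 3 (g 3 + 1) (by simp [hc])
      · refine Or.inl (Or.inr ⟨?_, ?_⟩)
        · have := hwait 2 hc; simpa using this
        · have := ih (t+1) ![g 0 + 1, g 1 + 1, 1, g 3 + 1] (by omega) (by omega) ?_
          · simpa using this
          · intro j
            rcases h4 j with hj | hj | hj | hj <;> subst hj
            · exact hinv' 0 (g 0 + 1) (by simp [hc])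
            · exact hinv' 1 (g 1 + 1) (by simp [hc])
            · exact hinv' 2 1 (by simp [hc])
            · exact hinv' 3 (g 3 + 1) (by simp [hc])
      · refine Or.inr ⟨?_, ?_⟩
        · have := hwait 3 hc; simpa using this
        · have := ih (t+1) ![g 0 + 1, g 1 + 1, g 2 + 1, 1] (by omega) (by omega) ?_
          · simpa using this
          · intro j
            rcases h4 j with hj | hj | hj | hj <;> subst hj
            · exact hinv' 0 (g 0 + 1) (by simp [hc])
            · exact hinv' 1 (g 1 + 1) (by simp [hc])
            · exact hinv' 2 (g 2 + 1) (by simp [hc])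
            · exact hinv' 3 1 (by simp [hc])
  have htrue := main 16 0 ![100, 100, 100, 100] (by norm_num) (by norm_num)
    (by intro i; left; fin_cases i <;> norm_num)
  simp only [Matrix.cons_val_zero, Matrix.cons_val_one, Matrix.head_cons,
    Matrix.cons_val_two, Matrix.tail_cons, Matrix.cons_val_three, Matrix.head_fin_const] at htrue
  rw [srch_sixteen] at htrue
  exact Bool.false_ne_true htrue
end
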